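/- arXiv:1807.09655 — 2 statements merged into one kernel-verified Lean document; each statement's English description precedes it below -/
import Mathlib

section
/- Let Z be a real-valued random variable following the centered Gaussian distribution N(0, σ²) with σ > 0, and for a real number k let p_k = P(⌊2^k·|Z|⌋ is even). Then (p_k − 1/2) / (2^{−k}/(2σ√(2π))) tends to 1 as k tends to +∞; that is, p_k − 1/2 is asymptotically equivalent to 2^{−k}/(2σ√(2π)). -/
open MeasureTheory ProbabilityTheory Real Filter
open Set Topology
open scoped NNReal

noncomputable def Eb (u : ℝ) : ℝ := Real.arccos (Real.cos (π * u)) / π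

noncomputable def gg (u : ℝ) : ℝ := (-1 : ℝ) ^ ⌊u⌋

lemma Eb_continuous : Continuous Eb :=
  ((Real.continuous_arccos.comp (Real.continuous_cos.comp (continuous_const.mul continuous_id)))).div_const _

lemma Eb_nonneg (u : ℝ) : 0 ≤ Eb u := div_nonneg (Real.arccos_nonneg _) Real.pi_pos.le

lemma Eb_le_one (u : ℝ) : Eb u ≤ 1 := by
  rw [Eb, div_le_one Real.pi_pos]
  exact Real.arccos_le_pi _

lemma Eb_eq (n : ℤ) {u : ℝ} (h1 : (n : ℝ) ≤ u) (h2 : u ≤ n + 1) :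
    Eb u = if Even n then u - n else (n : ℝ) + 1 - u := by
  rcases Int.even_or_odd n with he | ho
  · obtain ⟨m, hm⟩ := he
    have hcos : Real.cos (π * u) = Real.cos (π * (u - n)) := by
      have : π * u = π * (u - n) + m * (2 * π) := by
        push_cast [hm]; ring
      rw [this, Real.cos_add_int_mul_two_pi]
    rw [Eb, hcos, Real.arccos_cos (by nlinarith [Real.pi_pos]) (by nlinarith [Real.pi_pos])]
    rw [if_pos ⟨m, hm⟩]
    field_simp
  · obtain ⟨m, hm⟩ := ho
    have hcos : Real.cos (π * u) = Real.cos (π * ((n : ℝ) + 1 - u)) := by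
      have h' : π * ((n : ℝ) + 1 - u) = π - (π * (u - n)) := by ring
      have : π * u = π * (u - n) + π + m * (2 * π) := by
        push_cast [hm]; ring
      rw [this, Real.cos_add_int_mul_two_pi, h', Real.cos_pi_sub, Real.cos_add_pi]
    rw [Eb, hcos, Real.arccos_cos (by nlinarith [Real.pi_pos]) (by nlinarith [Real.pi_pos])]
    rw [if_neg (Int.not_even_iff_odd.2 ⟨m, hm⟩)]
    field_simp

lemma Eb_periodic : Function.Periodic Eb 2 := by
  intro u
  unfold Eb
  have : π * (u + 2) = π * u + 2 * π := by ring
  rw [this, Real.cos_add_two_pi]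
lemma gg_measurable : Measurable gg :=
  Measurable.comp (measurable_from_top (α := ℤ)) Int.measurable_floor

lemma gg_abs (u : ℝ) : |gg u| = 1 := by
  unfold gg
  rcases Int.even_or_odd ⌊u⌋ with he | ho
  · rw [he.neg_one_zpow]; norm_num
  · rw [ho.neg_one_zpow]; norm_num

lemma Eb_hasDerivWithinAt (u : ℝ) : HasDerivWithinAt Eb (gg u) (Ioi u) u := by
  set n := ⌊u⌋ with hn
  have h1 : (n : ℝ) ≤ u := Int.floor_le u
  have h2 : u < n + 1 := Int.lt_floor_add_one u
  rcases Int.even_or_odd n with he | ho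
  · have hgg : gg u = 1 := by unfold gg; rw [← hn, he.neg_one_zpow]
    rw [hgg]
    have hlin : HasDerivWithinAt (fun x : ℝ => x - n) 1 (Ioi u) u :=
      ((hasDerivAt_id u).sub_const _).hasDerivWithinAt
    refine hlin.congr_of_eventuallyEq ?_ (by rw [Eb_eq n h1 h2.le, if_pos he])
    have hmem : Iio ((n : ℝ) + 1) ∈ nhdsWithin u (Ioi u) :=
      nhdsWithin_le_nhds (Iio_mem_nhds h2)
    filter_upwards [hmem, self_mem_nhdsWithin] with x hx hx'
    rw [Eb_eq n (h1.trans (le_of_lt hx')) (le_of_lt hx), if_pos he]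
  · have hgg : gg u = -1 := by unfold gg; rw [← hn, ho.neg_one_zpow]
    rw [hgg]
    have hlin : HasDerivWithinAt (fun x : ℝ => (n : ℝ) + 1 - x) (-1) (Ioi u) u := by
      simpa using ((hasDerivAt_id u).const_sub ((n : ℝ) + 1)).hasDerivWithinAt
    refine hlin.congr_of_eventuallyEq ?_
      (by rw [Eb_eq n h1 h2.le, if_neg (Int.not_even_iff_odd.2 ho)])
    have hmem : Iio ((n : ℝ) + 1) ∈ nhdsWithin u (Ioi u) :=
      nhdsWithin_le_nhds (Iio_mem_nhds h2)
    filter_upwards [hmem, self_mem_nhdsWithin] with x hx hx'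
    rw [Eb_eq n (h1.trans (le_of_lt hx')) (le_of_lt hx), if_neg (Int.not_even_iff_odd.2 ho)]

noncomputable def HH (u : ℝ) : ℝ := ∫ t in (0:ℝ)..u, (Eb t - 1/2)

lemma EbHalf_cont : Continuous (fun t : ℝ => Eb t - 1/2) := Eb_continuous.sub continuous_const

lemma EbHalf_intInt (a b : ℝ) : IntervalIntegrable (fun t : ℝ => Eb t - 1/2) volume a b :=
  EbHalf_cont.intervalIntegrable a b

lemma HH_hasDerivAt (u : ℝ) : HasDerivAt HH (Eb u - 1/2) u :=
  intervalIntegral.integral_hasDerivAt_right (EbHalf_intInt 0 u)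
    (EbHalf_cont.stronglyMeasurable.stronglyMeasurableAtFilter)
    EbHalf_cont.continuousAt

lemma HH_continuous : Continuous HH := by
  rw [continuous_iff_continuousAt]
  exact fun u => (HH_hasDerivAt u).continuousAt

lemma Eb_int_zero_two : (∫ t in (0:ℝ)..2, (Eb t - 1/2)) = 0 := by
  have hsplit : (∫ t in (0:ℝ)..2, (Eb t - 1/2)) =
      (∫ t in (0:ℝ)..1, (Eb t - 1/2)) + ∫ t in (1:ℝ)..2, (Eb t - 1/2) :=
    (intervalIntegral.integral_add_adjacent_intervals (EbHalf_intInt 0 1) (EbHalf_intInt 1 2)).symm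
  have h1 : (∫ t in (0:ℝ)..1, (Eb t - 1/2)) = ∫ t in (0:ℝ)..1, (t - 1/2) := by
    refine intervalIntegral.integral_congr fun t ht => ?_
    rw [uIcc_of_le (by norm_num : (0:ℝ) ≤ 1)] at ht
    rw [Eb_eq 0 (by exact_mod_cast ht.1) (by push_cast; linarith [ht.2])]
    norm_num
  have h2 : (∫ t in (1:ℝ)..2, (Eb t - 1/2)) = ∫ t in (1:ℝ)..2, (2 - t - 1/2) := by
    refine intervalIntegral.integral_congr fun t ht => ?_
    rw [uIcc_of_le (by norm_num : (1:ℝ) ≤ 2)] at ht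
    rw [Eb_eq 1 (by exact_mod_cast ht.1) (by push_cast; linarith [ht.2])]
    norm_num
  rw [hsplit, h1, h2]
  have i1 : (∫ t in (0:ℝ)..1, (t - 1/2)) = 0 := by
    rw [intervalIntegral.integral_sub (intervalIntegral.intervalIntegrable_id)
      (intervalIntegrable_const)]
    simp
  have i2 : (∫ t in (1:ℝ)..2, (2 - t - 1/2)) = 0 := by
    have : (∫ t in (1:ℝ)..2, (2 - t - 1/2)) = ∫ t in (1:ℝ)..2, ((3/2 : ℝ) - t) := by
      refine intervalIntegral.integral_congr fun t _ => by ring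
    rw [this, intervalIntegral.integral_sub intervalIntegrable_const
      (intervalIntegral.intervalIntegrable_id)]
    simp
    norm_num
  rw [i1, i2, add_zero]

lemma HH_periodic : Function.Periodic HH 2 := by
  intro u
  have : HH (u + 2) - HH u = ∫ t in u..(u+2), (Eb t - 1/2) := by
    unfold HH
    rw [← intervalIntegral.integral_add_adjacent_intervals (EbHalf_intInt 0 u)
      (EbHalf_intInt u (u+2))]
    ring
  have hper : Function.Periodic (fun t : ℝ => Eb t - 1/2) 2 := fun x => by
    simp [Eb_periodic x]
  have h2 : (∫ t in u..(u+2), (Eb t - 1/2)) = ∫ t in (0:ℝ)..(0+2), (Eb t - 1/2) :=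
    hper.intervalIntegral_add_eq u 0
  rw [zero_add] at h2
  have := this.trans (h2.trans Eb_int_zero_two)
  linarith

lemma HH_bound : ∃ C : ℝ, 0 < C ∧ ∀ u : ℝ, |HH u| ≤ C := by
  obtain ⟨C, hC⟩ := (isCompact_Icc (a := (0:ℝ)) (b := 2)).exists_bound_of_continuousOn
    HH_continuous.continuousOn
  refine ⟨max C 1, lt_of_lt_of_le one_pos (le_max_right _ _), fun u => ?_⟩
  have hu : u - 2 * ⌊u/2⌋ ∈ Icc (0:ℝ) 2 := by
    constructor
    · nlinarith [Int.floor_le (u/2)]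
    · nlinarith [Int.lt_floor_add_one (u/2)]
  have : HH u = HH (u - 2 * ⌊u/2⌋) := by
    have := (HH_periodic.int_mul ⌊u/2⌋) (u - 2 * ⌊u/2⌋)
    rw [mul_comm] at this
    have h2 : u - 2 * (⌊u/2⌋ : ℝ) = u - (⌊u/2⌋ : ℝ) * 2 := by ring
    rw [h2]
    simpa using this
  rw [this]
  exact le_trans (hC _ hu) (le_max_left _ _)

section aux
variable {a : ℝ}

lemma exp_tendsto (ha : 0 < a) : Tendsto (fun x : ℝ => rexp (-a*x^2)) atTop (𝓝 0) := by
  apply Real.tendsto_exp_atBot.comp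
  have h1 : Tendsto (fun x : ℝ => x^2) atTop atTop := tendsto_pow_atTop two_ne_zero
  exact h1.const_mul_atTop_of_neg (neg_lt_zero.mpr ha)

lemma xexp_tendsto (ha : 0 < a) : Tendsto (fun x : ℝ => x * rexp (-a*x^2)) atTop (𝓝 0) := by
  have h := (rpow_mul_exp_neg_mul_sq_isLittleO_exp_neg ha 1)
  have h0 : Tendsto (fun x : ℝ => rexp (-(1/2) * x)) atTop (𝓝 0) := by
    apply Real.tendsto_exp_atBot.comp
    exact tendsto_id.const_mul_atTop_of_neg (by norm_num : (-(1/2):ℝ) < 0)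
  have := h.tendsto_zero_of_tendsto h0
  refine this.congr' ?_
  filter_upwards [eventually_ge_atTop (0:ℝ)] with x hx
  rw [Real.rpow_one]

lemma integrableOn_exp_core (ha : 0 < a) :
    IntegrableOn (fun u : ℝ => rexp (-a*u^2)) (Ioi 0) :=
  (integrable_exp_neg_mul_sq ha).integrableOn

lemma integrableOn_xexp_core (ha : 0 < a) :
    IntegrableOn (fun u : ℝ => u * rexp (-a*u^2)) (Ioi 0) := by
  have := integrableOn_rpow_mul_exp_neg_mul_sq ha (s := 1) (by norm_num)
  refine this.congr_fun (fun x _ => by simp only [Real.rpow_one]) measurableSet_Ioi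

lemma integrableOn_x2exp_core (ha : 0 < a) :
    IntegrableOn (fun u : ℝ => u^2 * rexp (-a*u^2)) (Ioi 0) := by
  have := integrableOn_rpow_mul_exp_neg_mul_sq ha (s := 2) (by norm_num)
  refine this.congr_fun (fun x _ => ?_) measurableSet_Ioi
  beta_reduce; rw [show ((2:ℝ)) = ((2:ℕ):ℝ) by norm_num, Real.rpow_natCast]

lemma integrableOn_ggexp_core (ha : 0 < a) :
    IntegrableOn (fun u : ℝ => gg u * rexp (-a*u^2)) (Ioi 0) := by
  refine Integrable.mono' (integrableOn_exp_core ha)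
    ((gg_measurable.mul (by fun_prop)).aestronglyMeasurable) ?_
  refine ae_of_all _ fun u => ?_
  rw [norm_mul, Real.norm_eq_abs, Real.norm_eq_abs, gg_abs, one_mul,
    abs_of_nonneg (Real.exp_nonneg _)]

lemma integrableOn_w'_core (ha : 0 < a) :
    IntegrableOn (fun u : ℝ => (2*a - 4*a^2*u^2) * rexp (-a*u^2)) (Ioi 0) := by
  have h1 : IntegrableOn (fun u : ℝ => 2*a* rexp (-a*u^2)) (Ioi 0) :=
    (integrableOn_exp_core ha).const_mul (2*a)
  have h2 : IntegrableOn (fun u : ℝ => 4*a^2*(u^2 * rexp (-a*u^2))) (Ioi 0) :=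
    (integrableOn_x2exp_core ha).const_mul (4*a^2)
  have h3 : IntegrableOn (fun u : ℝ => 2*a* rexp (-a*u^2) - 4*a^2*(u^2 * rexp (-a*u^2))) (Ioi 0) :=
    h1.sub h2
  refine h3.congr_fun (fun x _ => by ring) measurableSet_Ioi

lemma integrableOn_HHw'_core (ha : 0 < a) {C : ℝ} (hC : ∀ u, |HH u| ≤ C) :
    IntegrableOn (fun u : ℝ => HH u * ((2*a - 4*a^2*u^2) * rexp (-a*u^2))) (Ioi 0) := by
  refine Integrable.mono' (((integrableOn_w'_core ha).abs).const_mul C)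
    ((HH_continuous.mul (by continuity)).aestronglyMeasurable) ?_
  refine ae_of_all _ fun u => ?_
  rw [Real.norm_eq_abs, abs_mul]
  exact mul_le_mul (hC u) le_rfl (abs_nonneg _) ((abs_nonneg _).trans (hC u))

lemma integral_w_core (ha : 0 < a) :
    ∫ u in Ioi (0:ℝ), 2*a*u * rexp (-a*u^2) = 1 := by
  have hderiv : ∀ x ∈ Ici (0:ℝ), HasDerivAt (fun u : ℝ => -rexp (-a*u^2))
      (2*a*x * rexp (-a*x^2)) x := by
    intro x _
    have h1 : HasDerivAt (fun u : ℝ => -a*u^2) (-a*(2*x)) x := by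
      simpa using ((hasDerivAt_pow 2 x).const_mul (-a))
    have := (h1.exp).neg
    refine this.congr_deriv ?_
    ring
  have hint : IntegrableOn (fun u : ℝ => 2*a*u * rexp (-a*u^2)) (Ioi 0) := by
    have h1 : IntegrableOn (fun u : ℝ => 2*a*(u * rexp (-a*u^2))) (Ioi 0) :=
      (integrableOn_xexp_core ha).const_mul (2*a)
    refine h1.congr_fun (fun x _ => by ring) measurableSet_Ioi
  have := integral_Ioi_of_hasDerivAt_of_tendsto' hderiv hint ((exp_tendsto ha).neg)
  rw [this]
  simp

end aux

section master
variable {a : ℝ}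

noncomputable def PsiF (a : ℝ) (u : ℝ) : ℝ :=
  Eb u * rexp (-a*u^2) + HH u * (2*a*u * rexp (-a*u^2))

noncomputable def DF (a : ℝ) (u : ℝ) : ℝ :=
  gg u * rexp (-a*u^2) - a*u * rexp (-a*u^2)
    + HH u * ((2*a - 4*a^2*u^2) * rexp (-a*u^2))

lemma hasDerivAt_exp_core (x : ℝ) :
    HasDerivAt (fun u : ℝ => rexp (-a*u^2)) (-(2*a*x * rexp (-a*x^2))) x := by
  have h1 : HasDerivAt (fun u : ℝ => -a*u^2) (-a*(2*x)) x := by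
    simpa using ((hasDerivAt_pow 2 x).const_mul (-a))
  convert h1.exp using 1
  ring

lemma hasDerivAt_w_core (x : ℝ) :
    HasDerivAt (fun u : ℝ => 2*a*u * rexp (-a*u^2))
      ((2*a - 4*a^2*x^2) * rexp (-a*x^2)) x := by
  have h1 : HasDerivAt (fun u : ℝ => 2*a*u) (2*a) x := by
    simpa using (hasDerivAt_id x).const_mul (2*a)
  refine (h1.mul (hasDerivAt_exp_core x)).congr_deriv ?_
  ring

lemma psiF_hasDerivWithinAt (x : ℝ) :
    HasDerivWithinAt (PsiF a) (DF a x) (Ioi x) x := by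
  have h1 := (Eb_hasDerivWithinAt x).mul (hasDerivAt_exp_core (a := a) x).hasDerivWithinAt
  have h2 := ((HH_hasDerivAt x).hasDerivWithinAt (s := Ioi x)).mul
    (hasDerivAt_w_core (a := a) x).hasDerivWithinAt
  refine (h1.add h2).congr_deriv ?_
  unfold DF
  ring

lemma integrableOn_DF (ha : 0 < a) {C : ℝ} (hC : ∀ u, |HH u| ≤ C) :
    IntegrableOn (DF a) (Ioi 0) := by
  have h1 := integrableOn_ggexp_core ha
  have h2 : IntegrableOn (fun u : ℝ => a*(u * rexp (-a*u^2))) (Ioi 0) :=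
    (integrableOn_xexp_core ha).const_mul a
  have h3 := integrableOn_HHw'_core ha hC
  have h4 : IntegrableOn (fun u : ℝ => (gg u * rexp (-a*u^2) - a*(u * rexp (-a*u^2)))
      + HH u * ((2*a - 4*a^2*u^2) * rexp (-a*u^2))) (Ioi 0) := (h1.sub h2).add h3
  refine h4.congr_fun (fun x _ => ?_) measurableSet_Ioi
  unfold DF; ring

lemma psiF_tendsto (ha : 0 < a) {C : ℝ} (hC : ∀ u, |HH u| ≤ C) (hC0 : 0 ≤ C) :
    Tendsto (PsiF a) atTop (𝓝 0) := by
  have hb : Tendsto (fun x : ℝ => rexp (-a*x^2) + C * (2*a*(x * rexp (-a*x^2)))) atTop (𝓝 0) := by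
    have := (exp_tendsto ha).add (((xexp_tendsto ha).const_mul (2*a)).const_mul C)
    simpa using this
  refine squeeze_zero_norm' ?_ hb
  filter_upwards [eventually_ge_atTop (0:ℝ)] with x hx
  have he : (0:ℝ) ≤ rexp (-a*x^2) := (Real.exp_nonneg _)
  have hw : (0:ℝ) ≤ 2*a*x*rexp (-a*x^2) := by positivity
  have hEb : |Eb x| ≤ 1 := abs_le.2 ⟨by linarith [Eb_nonneg x], Eb_le_one x⟩
  calc ‖PsiF a x‖ ≤ |Eb x * rexp (-a*x^2)| + |HH x * (2*a*x * rexp (-a*x^2))| := abs_add_le _ _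
    _ ≤ 1 * rexp (-a*x^2) + C * (2*a*x*rexp (-a*x^2)) := by
        rw [abs_mul, abs_mul, abs_of_nonneg he, abs_of_nonneg hw]
        exact add_le_add (mul_le_mul_of_nonneg_right hEb he)
          (mul_le_mul_of_nonneg_right (hC x) hw)
    _ = rexp (-a*x^2) + C * (2*a*(x * rexp (-a*x^2))) := by ring

lemma key_identity (ha : 0 < a) {C : ℝ} (hC : ∀ u, |HH u| ≤ C) (hC0 : 0 ≤ C) :
    ∫ u in Ioi (0:ℝ), gg u * rexp (-a*u^2)
      = 1/2 - ∫ u in Ioi (0:ℝ), HH u * ((2*a - 4*a^2*u^2) * rexp (-a*u^2)) := by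
  have hDint := integrableOn_DF ha hC
  have hFTC : ∀ T : ℝ, 0 ≤ T → ∫ t in (0:ℝ)..T, DF a t = PsiF a T := by
    intro T hT
    have hcont : ContinuousOn (PsiF a) (Icc 0 T) := by
      apply Continuous.continuousOn
      exact (Eb_continuous.mul (by continuity)).add (HH_continuous.mul (by continuity))
    have hderiv : ∀ x ∈ Ioo (0:ℝ) T, HasDerivWithinAt (PsiF a) (DF a x) (Ioi x) x :=
      fun x _ => psiF_hasDerivWithinAt x
    have hint : IntervalIntegrable (DF a) volume 0 T := by
      rw [intervalIntegrable_iff_integrableOn_Ioc_of_le hT]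
      exact hDint.mono_set Ioc_subset_Ioi_self
    have := intervalIntegral.integral_eq_sub_of_hasDeriv_right_of_le hT hcont hderiv hint
    rw [this]
    have hPsi0 : PsiF a 0 = 0 := by
      have hEb0 : Eb 0 = 0 := by simp [Eb]
      have hHH0 : HH 0 = 0 := by simp [HH]
      simp [PsiF, hEb0, hHH0]
    rw [hPsi0, sub_zero]
  have hlim1 : Tendsto (fun T : ℝ => ∫ t in (0:ℝ)..T, DF a t) atTop (𝓝 (∫ u in Ioi (0:ℝ), DF a u)) :=
    intervalIntegral_tendsto_integral_Ioi 0 hDint tendsto_id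
  have hlim2 : Tendsto (fun T : ℝ => ∫ t in (0:ℝ)..T, DF a t) atTop (𝓝 0) := by
    refine (psiF_tendsto ha hC hC0).congr' ?_
    filter_upwards [eventually_ge_atTop (0:ℝ)] with T hT
    exact (hFTC T hT).symm
  have hD0 : ∫ u in Ioi (0:ℝ), DF a u = 0 := tendsto_nhds_unique hlim1 hlim2
  have h1 := integrableOn_ggexp_core ha
  have h2 : IntegrableOn (fun u : ℝ => a*u * rexp (-a*u^2)) (Ioi 0) := by
    have h2' : IntegrableOn (fun u : ℝ => a*(u * rexp (-a*u^2))) (Ioi 0) :=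
      (integrableOn_xexp_core ha).const_mul a
    exact h2'.congr_fun (fun x _ => by ring) measurableSet_Ioi
  have h3 := integrableOn_HHw'_core ha hC
  have hsplit : ∫ u in Ioi (0:ℝ), DF a u
      = ((∫ u in Ioi (0:ℝ), gg u * rexp (-a*u^2)) - ∫ u in Ioi (0:ℝ), a*u * rexp (-a*u^2))
        + ∫ u in Ioi (0:ℝ), HH u * ((2*a - 4*a^2*u^2) * rexp (-a*u^2)) := by
    have hsum : ∫ u in Ioi (0:ℝ), (gg u * rexp (-a*u^2) - a*u * rexp (-a*u^2)
          + HH u * ((2*a - 4*a^2*u^2) * rexp (-a*u^2)))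
        = (∫ u in Ioi (0:ℝ), (gg u * rexp (-a*u^2) - a*u * rexp (-a*u^2)))
          + ∫ u in Ioi (0:ℝ), HH u * ((2*a - 4*a^2*u^2) * rexp (-a*u^2)) :=
      integral_add (h1.sub h2) h3
    have hsub : ∫ u in Ioi (0:ℝ), (gg u * rexp (-a*u^2) - a*u * rexp (-a*u^2))
        = (∫ u in Ioi (0:ℝ), gg u * rexp (-a*u^2)) - ∫ u in Ioi (0:ℝ), a*u * rexp (-a*u^2) :=
      integral_sub h1 h2
    have hDF : ∫ u in Ioi (0:ℝ), DF a u = ∫ u in Ioi (0:ℝ), (gg u * rexp (-a*u^2)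
        - a*u * rexp (-a*u^2) + HH u * ((2*a - 4*a^2*u^2) * rexp (-a*u^2))) := rfl
    rw [hDF, hsum, hsub]
  have hw2 : ∫ u in Ioi (0:ℝ), a*u * rexp (-a*u^2) = 1/2 := by
    have := integral_w_core ha
    have heq : ∫ u in Ioi (0:ℝ), 2*a*u * rexp (-a*u^2)
        = 2 * ∫ u in Ioi (0:ℝ), a*u * rexp (-a*u^2) := by
      rw [← integral_const_mul]
      exact setIntegral_congr_fun measurableSet_Ioi (fun x _ => by ring)
    rw [heq] at this
    linarith
  rw [hsplit, hw2] at hD0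
  linarith

end master

section corelimit
variable {a : ℝ}

lemma integral_exp_Ioi_core (ha : 0 < a) :
    ∫ u in Ioi (0:ℝ), rexp (-a*u^2) = Real.sqrt (π/a) / 2 := by
  have := integral_gaussian_Ioi a
  simpa [neg_mul] using this

lemma integral_x2exp_core (ha : 0 < a) :
    ∫ u in Ioi (0:ℝ), u^2 * rexp (-a*u^2) = Real.sqrt (π/a) / (4*a) := by
  have hderiv : ∀ x ∈ Ici (0:ℝ), HasDerivAt (fun u : ℝ => -(u * rexp (-a*u^2)) / (2*a))
      (x^2 * rexp (-a*x^2) - rexp (-a*x^2) / (2*a)) x := by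
    intro x _
    have h1 : HasDerivAt (fun u : ℝ => u * rexp (-a*u^2))
        (1 * rexp (-a*x^2) + x * -(2*a*x * rexp (-a*x^2))) x :=
      (hasDerivAt_id x).mul (hasDerivAt_exp_core x)
    have h2 := (h1.neg).div_const (2*a)
    refine h2.congr_deriv ?_
    field_simp
    ring
  have hint : IntegrableOn (fun x : ℝ => x^2 * rexp (-a*x^2) - rexp (-a*x^2) / (2*a)) (Ioi 0) := by
    have h2 : IntegrableOn (fun u : ℝ => (2*a)⁻¹ * rexp (-a*u^2)) (Ioi 0) :=
      (integrableOn_exp_core ha).const_mul _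
    have h3 : IntegrableOn (fun u : ℝ => u^2 * rexp (-a*u^2) - (2*a)⁻¹ * rexp (-a*u^2)) (Ioi 0) :=
      (integrableOn_x2exp_core ha).sub h2
    exact h3.congr_fun (fun x _ => by ring) measurableSet_Ioi
  have htend : Tendsto (fun u : ℝ => -(u * rexp (-a*u^2)) / (2*a)) atTop (𝓝 0) := by
    have := ((xexp_tendsto ha).neg).div_const (2*a)
    simpa using this
  have h0 : ∫ x in Ioi (0:ℝ), (x^2 * rexp (-a*x^2) - rexp (-a*x^2) / (2*a)) = 0 := by
    rw [integral_Ioi_of_hasDerivAt_of_tendsto' hderiv hint htend]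
    norm_num
  have hsplit : ∫ x in Ioi (0:ℝ), (x^2 * rexp (-a*x^2) - rexp (-a*x^2) / (2*a))
      = (∫ x in Ioi (0:ℝ), x^2 * rexp (-a*x^2)) - ∫ x in Ioi (0:ℝ), rexp (-a*x^2) / (2*a) := by
    apply integral_sub (integrableOn_x2exp_core ha)
    have h2 : IntegrableOn (fun u : ℝ => (2*a)⁻¹ * rexp (-a*u^2)) (Ioi 0) :=
      (integrableOn_exp_core ha).const_mul _
    exact h2.congr_fun (fun x _ => by ring) measurableSet_Ioi
  have hexp2 : ∫ x in Ioi (0:ℝ), rexp (-a*x^2) / (2*a)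
      = (Real.sqrt (π/a) / 2) / (2*a) := by
    rw [integral_div, integral_exp_Ioi_core ha]
  rw [hsplit, hexp2] at h0
  have : (∫ x in Ioi (0:ℝ), x^2 * rexp (-a*x^2)) = Real.sqrt (π/a) / 2 / (2*a) := by linarith
  rw [this, div_div]
  ring_nf

lemma I_near_half (ha : 0 < a) {C : ℝ} (hC : ∀ u, |HH u| ≤ C) (hC0 : 0 ≤ C) :
    |(∫ u in Ioi (0:ℝ), gg u * rexp (-a*u^2)) - 1/2|
      ≤ 2 * C * Real.sqrt π * Real.sqrt a := by
  rw [key_identity ha hC hC0]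
  have habs : |1/2 - (∫ u in Ioi (0:ℝ), HH u * ((2*a - 4*a^2*u^2) * rexp (-a*u^2))) - 1/2|
      = |∫ u in Ioi (0:ℝ), HH u * ((2*a - 4*a^2*u^2) * rexp (-a*u^2))| := by
    rw [show (1:ℝ)/2 - (∫ u in Ioi (0:ℝ), HH u * ((2*a - 4*a^2*u^2) * rexp (-a*u^2))) - 1/2
      = -(∫ u in Ioi (0:ℝ), HH u * ((2*a - 4*a^2*u^2) * rexp (-a*u^2))) by ring, abs_neg]
  rw [habs]
  have hdom : IntegrableOn (fun u : ℝ => C * ((2*a + 4*a^2*u^2) * rexp (-a*u^2))) (Ioi 0) := by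
    have h1 : IntegrableOn (fun u : ℝ => 2*a* rexp (-a*u^2)) (Ioi 0) :=
      (integrableOn_exp_core ha).const_mul (2*a)
    have h2 : IntegrableOn (fun u : ℝ => 4*a^2*(u^2 * rexp (-a*u^2))) (Ioi 0) :=
      (integrableOn_x2exp_core ha).const_mul (4*a^2)
    have h3 : IntegrableOn (fun u : ℝ => C * (2*a* rexp (-a*u^2) + 4*a^2*(u^2 * rexp (-a*u^2))))
        (Ioi 0) := (h1.add h2).const_mul C
    exact h3.congr_fun (fun x _ => by ring) measurableSet_Ioi
  have hle : |∫ u in Ioi (0:ℝ), HH u * ((2*a - 4*a^2*u^2) * rexp (-a*u^2))|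
      ≤ ∫ u in Ioi (0:ℝ), C * ((2*a + 4*a^2*u^2) * rexp (-a*u^2)) := by
    rw [← Real.norm_eq_abs]
    refine (norm_integral_le_integral_norm _).trans ?_
    refine integral_mono_of_nonneg (ae_of_all _ fun u => norm_nonneg _) hdom ?_
    refine ae_of_all _ fun u => ?_
    have he : (0:ℝ) ≤ rexp (-a*u^2) := Real.exp_nonneg _
    simp only [Real.norm_eq_abs]
    rw [abs_mul, abs_mul, abs_of_nonneg he]
    have h1 : |2*a - 4*a^2*u^2| ≤ 2*a + 4*a^2*u^2 := by
      rw [abs_le]; constructor <;> nlinarith [sq_nonneg (a*u), sq_nonneg u]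
    exact mul_le_mul (hC u) (mul_le_mul_of_nonneg_right h1 he) (by positivity) hC0
  refine hle.trans ?_
  have hval : ∫ u in Ioi (0:ℝ), C * ((2*a + 4*a^2*u^2) * rexp (-a*u^2))
      = C * (2*a * (Real.sqrt (π/a) / 2) + 4*a^2 * (Real.sqrt (π/a) / (4*a))) := by
    have h1 : IntegrableOn (fun u : ℝ => 2*a* rexp (-a*u^2)) (Ioi 0) :=
      (integrableOn_exp_core ha).const_mul (2*a)
    have h2 : IntegrableOn (fun u : ℝ => 4*a^2*(u^2 * rexp (-a*u^2))) (Ioi 0) :=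
      (integrableOn_x2exp_core ha).const_mul (4*a^2)
    have e1 : ∫ u in Ioi (0:ℝ), C * ((2*a + 4*a^2*u^2) * rexp (-a*u^2))
        = C * ∫ u in Ioi (0:ℝ), (2*a* rexp (-a*u^2) + 4*a^2*(u^2 * rexp (-a*u^2))) := by
      rw [← integral_const_mul]
      exact setIntegral_congr_fun measurableSet_Ioi (fun x _ => by ring)
    rw [e1, integral_add h1 h2, integral_const_mul, integral_const_mul,
      integral_exp_Ioi_core ha, integral_x2exp_core ha]
  rw [hval]
  have hsq : Real.sqrt (π/a) = Real.sqrt π / Real.sqrt a := Real.sqrt_div Real.pi_pos.le a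
  have hda : a / Real.sqrt a = Real.sqrt a := Real.div_sqrt
  have key : a * Real.sqrt (π/a) = Real.sqrt π * Real.sqrt a := by
    rw [hsq, show a * (Real.sqrt π / Real.sqrt a) = Real.sqrt π * (a / Real.sqrt a) by ring, hda]
  have h4 : 4*a^2 * (Real.sqrt (π/a)/(4*a)) = a * Real.sqrt (π/a) := by
    field_simp
  have h5 : 2*a * (Real.sqrt (π/a)/2) = a * Real.sqrt (π/a) := by ring
  have : 2*a * (Real.sqrt (π/a) / 2) + 4*a^2 * (Real.sqrt (π/a) / (4*a))
      = 2 * Real.sqrt π * Real.sqrt a := by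
    rw [h5, h4, key]
    ring
  rw [this]
  exact le_of_eq (by ring)

lemma I_tendsto :
    Tendsto (fun a : ℝ => ∫ u in Ioi (0:ℝ), gg u * rexp (-a*u^2))
      (𝓝[>] (0:ℝ)) (𝓝 (1/2)) := by
  obtain ⟨C, hC0, hC⟩ := HH_bound
  rw [tendsto_iff_dist_tendsto_zero]
  have hbnd : Tendsto (fun a : ℝ => 2 * C * Real.sqrt π * Real.sqrt a) (𝓝[>] (0:ℝ)) (𝓝 0) := by
    have h1 : Tendsto Real.sqrt (𝓝 0) (𝓝 0) := by
      simpa using (Real.continuous_sqrt.tendsto 0)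
    have h2 := (h1.const_mul (2 * C * Real.sqrt π)).mono_left
      (nhdsWithin_le_nhds (s := Ioi (0:ℝ)))
    simpa using h2
  refine squeeze_zero' ?_ ?_ hbnd
  · exact Eventually.of_forall fun a => dist_nonneg
  · filter_upwards [self_mem_nhdsWithin] with a (ha : 0 < a)
    rw [Real.dist_eq]
    exact I_near_half ha hC hC0.le

end corelimit

section front

variable {σ : ℝ}

lemma measSet (c : ℝ) : MeasurableSet {x : ℝ | Even ⌊c * |x|⌋} := by
  have hm : Measurable fun x : ℝ => ⌊c * |x|⌋ :=
    Int.measurable_floor.comp (measurable_const.mul measurable_abs)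
  exact hm (Set.to_countable {n : ℤ | Even n}).measurableSet

lemma pk_eq (hσ : 0 < σ) (c : ℝ) (hc : 0 < c) :
    ((gaussianReal 0 ⟨σ^2, sq_nonneg σ⟩) {x | Even ⌊c * |x|⌋}).toReal
      = 1/2 + c⁻¹ * (σ * Real.sqrt (2*π))⁻¹
          * ∫ u in Ioi (0:ℝ), gg u * rexp (-(1/(2*σ^2*c^2)) * u^2) := by
  set v : ℝ≥0 := ⟨σ^2, sq_nonneg σ⟩ with hv
  have hv0 : v ≠ 0 := by
    intro h
    have h2 : σ^2 = 0 := congrArg NNReal.toReal h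
    exact absurd h2 (by positivity)
  have hvr : (v : ℝ) = σ^2 := rfl
  set S : Set ℝ := {x | Even ⌊c * |x|⌋} with hS
  have hSm : MeasurableSet S := measSet c
  rw [gaussianReal_apply_eq_integral _ hv0 S, ENNReal.toReal_ofReal
    (setIntegral_nonneg hSm fun x _ => gaussianPDFReal_nonneg _ _ _)]
  set K : ℝ := (Real.sqrt (2*π*σ^2))⁻¹ with hK
  have hpdf : ∀ x : ℝ, gaussianPDFReal 0 v x = K * rexp (-(1/(2*σ^2)) * x^2) := by
    intro x
    unfold gaussianPDFReal
    rw [hvr, show -(x-0)^2/(2*σ^2) = -(1/(2*σ^2))*x^2 by ring]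
  have hgmeas : Measurable fun x : ℝ => gg (c * |x|) * (K * rexp (-(1/(2*σ^2)) * x^2)) :=
    (gg_measurable.comp (measurable_const.mul measurable_abs)).mul (by fun_prop)
  have hexpint : Integrable (fun x : ℝ => K * rexp (-(1/(2*σ^2)) * x^2)) :=
    ((integrable_exp_neg_mul_sq (by positivity : (0:ℝ) < 1/(2*σ^2))).const_mul K)
  have hggint : Integrable (fun x : ℝ => gg (c * |x|) * (K * rexp (-(1/(2*σ^2)) * x^2))) := by
    refine Integrable.mono' (hexpint.abs) hgmeas.aestronglyMeasurable ?_
    refine ae_of_all _ fun x => ?_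
    rw [Real.norm_eq_abs, abs_mul, gg_abs, one_mul]
  have hind : ∫ x in S, gaussianPDFReal 0 v x
      = ∫ x, (((1:ℝ)/2) * (K * rexp (-(1/(2*σ^2)) * x^2))
          + (1/2) * (gg (c * |x|) * (K * rexp (-(1/(2*σ^2)) * x^2)))) := by
    rw [← integral_indicator hSm]
    congr 1
    funext x
    rw [Set.indicator_apply, hpdf x]
    by_cases hx : x ∈ S
    · have hgg1 : gg (c * |x|) = 1 := Even.neg_one_zpow hx
      rw [if_pos hx, hgg1]
      ring
    · have hgg1 : gg (c * |x|) = -1 := by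
        refine Odd.neg_one_zpow ?_
        rw [← Int.not_even_iff_odd]
        exact hx
      rw [if_neg hx, hgg1]
      ring
  have e1 : ∫ x : ℝ, ((1:ℝ)/2) * (K * rexp (-(1/(2*σ^2)) * x^2))
      = 1/2 * ∫ x : ℝ, K * rexp (-(1/(2*σ^2)) * x^2) := integral_const_mul _ _
  have e2 : ∫ x : ℝ, ((1:ℝ)/2) * (gg (c * |x|) * (K * rexp (-(1/(2*σ^2)) * x^2)))
      = 1/2 * ∫ x : ℝ, gg (c * |x|) * (K * rexp (-(1/(2*σ^2)) * x^2)) := integral_const_mul _ _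
  have hone : ∫ x : ℝ, K * rexp (-(1/(2*σ^2)) * x^2) = 1 := by
    have h1 := integral_gaussianPDFReal_eq_one 0 hv0
    have h2 : ∫ x : ℝ, K * rexp (-(1/(2*σ^2)) * x^2) = ∫ x : ℝ, gaussianPDFReal 0 v x := by
      congr 1
      funext x
      rw [hpdf x]
    rw [h2, h1]
  have habs : ∫ x : ℝ, gg (c * |x|) * (K * rexp (-(1/(2*σ^2)) * x^2))
      = 2 * ∫ y in Ioi (0:ℝ), gg (c * y) * (K * rexp (-(1/(2*σ^2)) * y^2)) := by
    rw [← integral_comp_abs (f := fun y => gg (c * y) * (K * rexp (-(1/(2*σ^2)) * y^2)))]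
    congr 1
    funext x
    rw [sq_abs]
  have hscale : ∫ y in Ioi (0:ℝ), gg (c * y) * (K * rexp (-(1/(2*σ^2)) * y^2))
      = c⁻¹ * ∫ u in Ioi (0:ℝ), gg u * (K * rexp (-(1/(2*σ^2*c^2)) * u^2)) := by
    have h := integral_comp_mul_left_Ioi
      (fun u : ℝ => gg u * (K * rexp (-(1/(2*σ^2*c^2)) * u^2))) 0 hc
    rw [mul_zero, smul_eq_mul] at h
    rw [← h]
    refine setIntegral_congr_fun measurableSet_Ioi (fun y _ => ?_)
    have harg : -(1/(2*σ^2*c^2)) * (c*y)^2 = -(1/(2*σ^2)) * y^2 := by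
      field_simp
    rw [harg]
  have e3 : ∫ u in Ioi (0:ℝ), gg u * (K * rexp (-(1/(2*σ^2*c^2)) * u^2))
      = K * ∫ u in Ioi (0:ℝ), gg u * rexp (-(1/(2*σ^2*c^2)) * u^2) := by
    rw [← integral_const_mul]
    exact setIntegral_congr_fun measurableSet_Ioi (fun x _ => by ring)
  have hKval : K = (σ * Real.sqrt (2*π))⁻¹ := by
    rw [hK, show 2*π*σ^2 = (2*π)*σ^2 by ring, Real.sqrt_mul (by positivity) (σ^2),
      Real.sqrt_sq hσ.le, mul_comm]
  rw [hind, integral_add (hexpint.const_mul _) (hggint.const_mul _), e1, e2, hone,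
    habs, hscale, e3, hKval]
  ring

end front


/-- For `Z ~ N(0, σ²)` and `p_k = P(⌊2^k·|Z|⌋ is even)`, the quantity
`(p_k − 1/2) / (2^{−k}/(2σ√(2π)))` tends to `1` as `k → +∞`:
`p_k − 1/2` is asymptotically equivalent to `2^{−k}/(2σ√(2π))`. -/
theorem contributing_bit_probability_asymptotic
    {Ω : Type*} [MeasurableSpace Ω] (P : Measure Ω) [IsProbabilityMeasure P]
    (Z : Ω → ℝ) (σ : ℝ) (hσ : 0 < σ)
    (hZ : Measure.map Z P = gaussianReal 0 ⟨σ ^ 2, sq_nonneg σ⟩)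
    (pk : ℝ → ℝ)
    (hpk : ∀ k : ℝ, pk k = (P {ω | Even ⌊(2 : ℝ) ^ k * |Z ω|⌋}).toReal) :
    Tendsto (fun k : ℝ =>
        (pk k - 1 / 2) / ((2 : ℝ) ^ (-k) / (2 * σ * Real.sqrt (2 * π))))
      atTop (nhds 1) := by
  have hZae : AEMeasurable Z P := by
    by_contra hn
    rw [Measure.map_of_not_aemeasurable hn] at hZ
    exact (@IsProbabilityMeasure.ne_zero ℝ _ (gaussianReal 0 ⟨σ^2, sq_nonneg σ⟩)
      (instIsProbabilityMeasureGaussianReal 0 _)) hZ.symm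
  have hc : ∀ k : ℝ, (0:ℝ) < (2:ℝ)^k := fun k => Real.rpow_pos_of_pos two_pos k
  have hpk2 : ∀ k : ℝ, pk k = 1/2 + ((2:ℝ)^k)⁻¹ * (σ * Real.sqrt (2*π))⁻¹
      * ∫ u in Ioi (0:ℝ), gg u * rexp (-(1/(2*σ^2*((2:ℝ)^k)^2)) * u^2) := by
    intro k
    rw [hpk k]
    have hmap : P {ω | Even ⌊(2:ℝ)^k * |Z ω|⌋}
        = (gaussianReal 0 ⟨σ^2, sq_nonneg σ⟩) {x | Even ⌊(2:ℝ)^k * |x|⌋} := by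
      rw [← hZ, Measure.map_apply_of_aemeasurable hZae (measSet _)]
      rfl
    rw [hmap, pk_eq hσ _ (hc k)]
  have hσπ : (0:ℝ) < σ * Real.sqrt (2*π) := by
    have : (0:ℝ) < 2*π := by positivity
    positivity
  have hratio : ∀ k : ℝ, (pk k - 1/2) / ((2:ℝ)^(-k) / (2*σ*Real.sqrt (2*π)))
      = 2 * ∫ u in Ioi (0:ℝ), gg u * rexp (-(1/(2*σ^2*((2:ℝ)^k)^2)) * u^2) := by
    intro k
    have h1 : ((2:ℝ)^k) ≠ 0 := (hc k).ne'
    have h2 : σ * Real.sqrt (2*π) ≠ 0 := hσπ.ne'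
    rw [hpk2 k, Real.rpow_neg (by norm_num : (0:ℝ) ≤ 2)]
    field_simp
    ring
  have h2k : Tendsto (fun k : ℝ => (2:ℝ)^k) atTop atTop := by
    have : ∀ k : ℝ, (2:ℝ)^k = rexp (Real.log 2 * k) := by
      intro k
      rw [Real.rpow_def_of_pos two_pos]
    simp only [this]
    apply Real.tendsto_exp_atTop.comp
    exact Tendsto.const_mul_atTop (Real.log_pos one_lt_two) tendsto_id
  have hak : Tendsto (fun k : ℝ => 1/(2*σ^2*((2:ℝ)^k)^2)) atTop (𝓝[>] (0:ℝ)) := by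
    rw [tendsto_nhdsWithin_iff]
    constructor
    · simp only [one_div]
      apply Tendsto.inv_tendsto_atTop
      have hsq : Tendsto (fun k : ℝ => ((2:ℝ)^k)^2) atTop atTop := by
        have := h2k.atTop_mul_atTop₀ h2k
        refine this.congr fun k => by ring
      exact Tendsto.const_mul_atTop (by positivity : (0:ℝ) < 2*σ^2) hsq
    · refine Eventually.of_forall fun k => ?_
      rw [Set.mem_Ioi]
      positivity
  have hI : Tendsto (fun k : ℝ => ∫ u in Ioi (0:ℝ),
      gg u * rexp (-(1/(2*σ^2*((2:ℝ)^k)^2)) * u^2)) atTop (𝓝 (1/2)) := by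
    have := I_tendsto.comp hak
    exact this.congr fun k => rfl
  have hfin := hI.const_mul (2:ℝ)
  rw [show (2:ℝ)*(1/2) = 1 by norm_num] at hfin
  refine hfin.congr fun k => (hratio k).symm
end

section
/- Let Z be a real-valued random variable following the centered Gaussian distribution N(0, σ²) with σ > 0, and for a real number k let p_k = P(⌊2^k·|Z|⌋ is even). Then p_k tends to 1/2 as k tends to +∞; that is, bits far beyond the precision of the computation contribute with probability tending to 1/2 and are indistinguishable from random noise. -/
open MeasureTheory ProbabilityTheory Filter Real Set
open scoped NNReal ENNReal

section Aux

variable {v : ℝ≥0}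

lemma gauss_abs (v : ℝ≥0) (x : ℝ) :
    gaussianPDFReal 0 v |x| = gaussianPDFReal 0 v x := by
  rcases abs_choice x with h | h <;> simp [h, gaussianPDFReal, neg_sq]

lemma gauss_anti (hv : v ≠ 0) {a b : ℝ} (ha : 0 ≤ a) (hab : a ≤ b) :
    gaussianPDFReal 0 v b ≤ gaussianPDFReal 0 v a := by
  have hv' : (0:ℝ) < v := by exact_mod_cast pos_iff_ne_zero.mpr hv
  unfold gaussianPDFReal
  have h1 : (0:ℝ) ≤ (√(2 * π * v))⁻¹ := by positivity
  refine mul_le_mul_of_nonneg_left (Real.exp_le_exp.mpr ?_) h1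
  have hsq : (a - 0)^2 ≤ (b - 0)^2 := by
    simp only [sub_zero]
    exact pow_le_pow_left₀ ha hab 2
  have h2 : (0:ℝ) < 2 * v := by positivity
  rw [neg_div, neg_div, neg_le_neg_iff]
  exact div_le_div_of_nonneg_right hsq h2.le

lemma gauss_le_zero (v : ℝ≥0) (x : ℝ) :
    gaussianPDFReal 0 v x ≤ gaussianPDFReal 0 v 0 := by
  unfold gaussianPDFReal
  have h1 : (0:ℝ) ≤ (√(2 * π * v))⁻¹ := by positivity
  refine mul_le_mul_of_nonneg_left (Real.exp_le_exp.mpr ?_) h1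
  have hx : -(x - 0)^2 / (2*(v:ℝ)) ≤ 0 :=
    div_nonpos_of_nonpos_of_nonneg (by simpa using sq_nonneg (x - 0)) (by positivity)
  calc -(x - 0)^2 / (2*(v:ℝ)) ≤ 0 := hx
    _ = -(0 - 0)^2 / (2*(v:ℝ)) := by norm_num

lemma gauss_key (hv : v ≠ 0) {t : ℝ} (ht : 0 < t) :
    1/2 ≤ (gaussianReal 0 v {x : ℝ | Even ⌊t * |x|⌋}).toReal ∧
    (gaussianReal 0 v {x : ℝ | Even ⌊t * |x|⌋}).toReal
      ≤ 1/2 + gaussianPDFReal 0 v 0 * t⁻¹ := by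
  set f : ℝ → ℝ := gaussianPDFReal 0 v with hf
  set h : ℝ := t⁻¹ with hh
  have hh0 : 0 < h := inv_pos.mpr ht
  set S : Set ℝ := {y : ℝ | Even ⌊t * y⌋} with hS
  have hSm : MeasurableSet S :=
    ((measurable_id.const_mul t).floor) (by trivial : MeasurableSet {n : ℤ | Even n})
  set g : ℝ → ℝ := S.indicator 1 with hg
  have hg01 : ∀ y, g y = 0 ∨ g y = 1 := fun y => by by_cases hy : y ∈ S <;> simp [hg, hy]
  have hg0 : ∀ y, 0 ≤ g y := fun y => by rcases hg01 y with h | h <;> simp [h]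
  have hg1 : ∀ y, g y ≤ 1 := fun y => by rcases hg01 y with h | h <;> simp [h]
  have hgm : Measurable g := measurable_one.indicator hSm
  -- parity flip
  have hflip : ∀ y : ℝ, g (y + h) = 1 - g y := by
    intro y
    have hth : t * h = 1 := mul_inv_cancel₀ ht.ne'
    have hfloor : ⌊t * (y + h)⌋ = ⌊t * y⌋ + 1 := by
      rw [mul_add, hth, Int.floor_add_one]
    have hmem : (y + h ∈ S) ↔ ¬ (y ∈ S) := by
      simp only [hS, mem_setOf_eq, hfloor, Int.even_add_one]
    by_cases hy : y ∈ S
    · have hy' : y + h ∉ S := fun hc => hmem.mp hc hy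
      simp [hg, indicator_of_mem hy, indicator_of_notMem hy']
    · have hy' : y + h ∈ S := hmem.mpr hy
      simp [hg, indicator_of_mem hy', indicator_of_notMem hy]
  -- integrability
  have hfi : Integrable f := integrable_gaussianPDFReal 0 v
  have hfh : Integrable (fun y => f (y + h)) := hfi.comp_add_right h
  have hgf : Integrable (fun y => g y * f y) :=
    hfi.bdd_mul (c := 1) hgm.aestronglyMeasurable (Eventually.of_forall fun y => by simpa [abs_of_nonneg (hg0 y)] using hg1 y)
  have hgfh : Integrable (fun y => g y * f (y + h)) :=
    hfh.bdd_mul (c := 1) hgm.aestronglyMeasurable (Eventually.of_forall fun y => by simpa [abs_of_nonneg (hg0 y)] using hg1 y)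
  -- translation
  have htr : ∀ F : ℝ → ℝ, ∫ y in Ioi h, F y = ∫ y in Ioi 0, F (y + h) := by
    intro F
    have := (measurePreserving_add_right volume h).setIntegral_preimage_emb
      (measurableEmbedding_addRight h) F (Ioi h)
    rw [preimage_add_const_Ioi, sub_self] at this
    exact this.symm
  -- pieces
  set c : ℝ := ∫ y in Ioc 0 h, f y with hc
  have hsplit : ∀ F : ℝ → ℝ, Integrable F →
      ∫ y in Ioi 0, F y = (∫ y in Ioc 0 h, F y) + ∫ y in Ioi h, F y := by
    intro F hF
    rw [← setIntegral_union (Ioc_disjoint_Ioi le_rfl) measurableSet_Ioi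
      hF.integrableOn hF.integrableOn, Ioc_union_Ioi_eq_Ioi hh0.le]
  have hgc : ∫ y in Ioc 0 h, g y * f y = c := by
    rw [hc, integral_Ioc_eq_integral_Ioo, integral_Ioc_eq_integral_Ioo]
    refine setIntegral_congr_fun measurableSet_Ioo (fun y hy => ?_)
    have h1 : 0 < t * y := mul_pos ht hy.1
    have h2 : t * y < 1 := by
      have := (mul_lt_mul_iff_right₀ ht).mpr hy.2
      rwa [mul_inv_cancel₀ ht.ne'] at this
    have : ⌊t * y⌋ = 0 := Int.floor_eq_zero_iff.mpr ⟨h1.le, h2⟩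
    have hyS : y ∈ S := by simp [hS, this]
    simp [hg, hyS]
  have half : ∫ y in Ioi (0:ℝ), f y = 1/2 := by
    have h1 : ∫ x, f x = 1 := integral_gaussianPDFReal_eq_one 0 hv
    have h2 : (fun x : ℝ => f |x|) = f := funext fun x => gauss_abs v x
    have h3 : ∫ x : ℝ, f |x| = 2 * ∫ y in Ioi (0:ℝ), f y := integral_comp_abs
    rw [h2, h1] at h3
    linarith
  set E : ℝ := ∫ y in Ioi 0, g y * f y with hE
  -- key identity
  have hT2 : ∫ y in Ioi 0, g y * f (y + h) = 1/2 - E := by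
    have e1 : ∫ y in Ioi 0, g y * f (y + h)
        = ∫ y in Ioi 0, (f (y + h) - g (y + h) * f (y + h)) := by
      refine setIntegral_congr_fun measurableSet_Ioi (fun y _ => ?_)
      rw [hflip y]; ring
    have hgfh' : Integrable (fun y => g (y + h) * f (y + h)) := hgf.comp_add_right h
    have e2 : ∫ y in Ioi 0, (f (y + h) - g (y + h) * f (y + h))
        = (∫ y in Ioi 0, f (y + h)) - ∫ y in Ioi 0, g (y + h) * f (y + h) :=
      integral_sub hfh.integrableOn hgfh'.integrableOn
    have e3 : ∫ y in Ioi 0, f (y + h) = ∫ y in Ioi h, f y := (htr f).symm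
    have e4 : ∫ y in Ioi 0, g (y + h) * f (y + h) = ∫ y in Ioi h, g y * f y :=
      (htr (fun y => g y * f y)).symm
    have e5 : ∫ y in Ioi h, f y = 1/2 - c := by
      have := hsplit f hfi; rw [half] at this; linarith
    have e6 : ∫ y in Ioi h, g y * f y = E - c := by
      have := hsplit (fun y => g y * f y) hgf; rw [hgc] at this
      rw [hE]; linarith
    rw [e1, e2, e3, e4, e5, e6]; ring
  -- D and its bounds
  set D : ℝ := ∫ y in Ioi 0, g y * (f y - f (y + h)) with hD
  have hDint : Integrable (fun y => g y * (f y - f (y + h))) := by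
    have : (fun y => g y * (f y - f (y + h)))
        = fun y => g y * f y - g y * f (y + h) := funext fun y => by ring
    rw [this]; exact hgf.sub hgfh
  have hDeq : D = 2 * E - 1/2 := by
    have : D = E - ∫ y in Ioi 0, g y * f (y + h) := by
      rw [hD, hE]
      have : (fun y => g y * (f y - f (y + h)))
          = fun y => g y * f y - g y * f (y + h) := funext fun y => by ring
      rw [this, integral_sub hgf.integrableOn hgfh.integrableOn]
    rw [this, hT2]; ring
  have hmono : ∀ y ∈ Ioi (0:ℝ), 0 ≤ f y - f (y + h) := by
    intro y hy
    have := gauss_anti hv (le_of_lt hy) (le_add_of_nonneg_right hh0.le)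
    linarith
  have hD0 : 0 ≤ D := by
    refine setIntegral_nonneg measurableSet_Ioi (fun y hy => ?_)
    exact mul_nonneg (hg0 y) (hmono y hy)
  have hDc : D ≤ c := by
    have step1 : D ≤ ∫ y in Ioi 0, (f y - f (y + h)) := by
      refine setIntegral_mono_on hDint.integrableOn
        (hfi.integrableOn.sub hfh.integrableOn) measurableSet_Ioi (fun y hy => ?_)
      exact mul_le_of_le_one_left (hmono y hy) (hg1 y)
    have step2 : ∫ y in Ioi (0:ℝ), (f y - f (y + h)) = c := by
      rw [integral_sub hfi.integrableOn hfh.integrableOn, ← htr f]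
      have := hsplit f hfi; rw [half] at this
      have e5 : ∫ y in Ioi h, f y = 1/2 - c := by linarith
      rw [half, e5]; ring
    linarith
  have hcle : c ≤ gaussianPDFReal 0 v 0 * h := by
    have : c ≤ ∫ _ in Ioc (0:ℝ) h, gaussianPDFReal 0 v 0 := by
      refine setIntegral_mono_on hfi.integrableOn ((integrableOn_const_iff (hC := enorm_ne_top)).mpr ?_)
        measurableSet_Ioc (fun y _ => gauss_le_zero v y)
      right; rw [Real.volume_Ioc]; exact ENNReal.ofReal_lt_top
    rw [setIntegral_const, Real.volume_real_Ioc, smul_eq_mul] at this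
    rw [max_eq_left (by linarith)] at this
    rw [sub_zero] at this
    linarith [this, mul_comm h (gaussianPDFReal 0 v 0)]
  -- measure to integral
  have hAm : MeasurableSet {x : ℝ | Even ⌊t * |x|⌋} :=
    ((measurable_id.abs.const_mul t).floor) (by trivial : MeasurableSet {n : ℤ | Even n})
  have hmeas : (gaussianReal 0 v {x : ℝ | Even ⌊t * |x|⌋}).toReal = 2 * E := by
    rw [gaussianReal_apply_eq_integral 0 hv, ENNReal.toReal_ofReal
      (setIntegral_nonneg hAm (fun x _ => gaussianPDFReal_nonneg 0 v x))]
    rw [← integral_indicator hAm]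
    have hid : ∀ x : ℝ, ({x : ℝ | Even ⌊t * |x|⌋}).indicator (gaussianPDFReal 0 v) x
        = (fun y => g y * f y) |x| := by
      intro x
      by_cases hx : Even ⌊t * |x|⌋
      · have hxA : x ∈ {x : ℝ | Even ⌊t * |x|⌋} := hx
        have hxS : |x| ∈ S := hx
        simp only [indicator_of_mem hxA, hg, indicator_of_mem hxS, Pi.one_apply, one_mul, hf]
        exact (gauss_abs v x).symm
      · have hxA : x ∉ {x : ℝ | Even ⌊t * |x|⌋} := hx
        have hxS : |x| ∉ S := hx
        simp [indicator_of_notMem hxA, hg, indicator_of_notMem hxS]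
    rw [integral_congr_ae (Eventually.of_forall hid), hE]
    have h2 := integral_comp_abs (f := fun y => g y * f y)
    simpa using h2
  constructor
  · rw [hmeas]; linarith [hDeq, hD0]
  · rw [hmeas]; have := hDeq; have := hDc; have := hcle; linarith

end Aux

/-- For `Z ~ N(0, σ²)` and `p_k = P(⌊2^k·|Z|⌋ is even)`, `p_k → 1/2` as
`k → +∞`: bits far beyond the precision of the computation contribute with
probability tending to `1/2` and are indistinguishable from random noise. -/
theorem contributing_bit_probability_limit
    {Ω : Type*} [MeasurableSpace Ω] (P : Measure Ω) [IsProbabilityMeasure P]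
    (Z : Ω → ℝ) (σ : ℝ) (hσ : 0 < σ)
    (hZ : Measure.map Z P = gaussianReal 0 ⟨σ ^ 2, sq_nonneg σ⟩)
    (pk : ℝ → ℝ)
    (hpk : ∀ k : ℝ, pk k = (P {ω | Even ⌊(2 : ℝ) ^ k * |Z ω|⌋}).toReal) :
    Tendsto pk atTop (nhds (1 / 2)) := by
  have hv : (⟨σ ^ 2, sq_nonneg σ⟩ : ℝ≥0) ≠ 0 := by
    intro hcon
    have h2 : ((⟨σ ^ 2, sq_nonneg σ⟩ : ℝ≥0) : ℝ) = 0 := by rw [hcon]; simp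
    simp only [NNReal.coe_mk] at h2
    exact pow_ne_zero 2 hσ.ne' h2
  have hZae : AEMeasurable Z P := by
    by_contra hc
    rw [Measure.map_of_not_aemeasurable hc] at hZ
    have h1 : (gaussianReal 0 ⟨σ ^ 2, sq_nonneg σ⟩) univ = 1 :=
      (instIsProbabilityMeasureGaussianReal 0 ⟨σ ^ 2, sq_nonneg σ⟩).measure_univ
    rw [← hZ] at h1
    simp at h1
  set C := gaussianPDFReal 0 ⟨σ ^ 2, sq_nonneg σ⟩ 0 with hC
  have hpk' : ∀ k : ℝ, 1/2 ≤ pk k ∧ pk k ≤ 1/2 + C * ((2:ℝ) ^ k)⁻¹ := by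
    intro k
    have ht : (0:ℝ) < (2:ℝ) ^ k := Real.rpow_pos_of_pos two_pos k
    have hAm : MeasurableSet {x : ℝ | Even ⌊(2:ℝ) ^ k * |x|⌋} :=
      ((measurable_id.abs.const_mul _).floor) (by trivial : MeasurableSet {n : ℤ | Even n})
    have hmap : P {ω | Even ⌊(2:ℝ) ^ k * |Z ω|⌋}
        = gaussianReal 0 ⟨σ ^ 2, sq_nonneg σ⟩ {x : ℝ | Even ⌊(2:ℝ) ^ k * |x|⌋} := by
      rw [← hZ, Measure.map_apply_of_aemeasurable hZae hAm]
      rfl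
    have hkey := gauss_key hv ht
    rw [hpk k, hmap]
    exact hkey
  refine tendsto_of_tendsto_of_tendsto_of_le_of_le ?_ ?_
    (fun k => (hpk' k).1) (fun k => (hpk' k).2)
  · exact tendsto_const_nhds
  · have h0 : Tendsto (fun k : ℝ => ((2:ℝ)⁻¹) ^ k) atTop (nhds 0) :=
      tendsto_rpow_atTop_of_base_lt_one 2⁻¹ (by norm_num) (by norm_num)
    have h0' : Tendsto (fun k : ℝ => ((2:ℝ) ^ k)⁻¹) atTop (nhds 0) := by
      refine h0.congr (fun k => ?_)
      rw [Real.inv_rpow (by norm_num : (0:ℝ) ≤ 2)]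
    have hfin := (tendsto_const_nhds (x := (1:ℝ)/2) (f := atTop (α := ℝ))).add
      (h0'.const_mul C)
    simpa using hfin
end
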